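/- Let N ≥ 2 and 1 ≤ k ≤ N-1 be integers, let g : ℝ^k → ℝ be twice continuously differentiable on an open set containing the open simplex Σ_k, and set f(u) = g(u)·s_k(u) with s_k(u) = (1-u_1-⋯-u_k)^{N-k-1}. Then for every u ∈ Σ_k: k(N-k-1)·f(u) + ∑_{i=1}^k (1+(N-2k-2)u_i)·∂_i f(u) + ∑_{i=1}^k u_i(1-u_i)·∂_{ii} f(u) − ∑_{i≠j} u_i u_j·∂_{ij} f(u) = s_k(u) · [ ∑_{i=1}^k (1-N u_i)·∂_i g(u) + ∑_{i=1}^k u_i(1-u_i)·∂_{ii} g(u) − ∑_{i≠j} u_i u_j·∂_{ij} g(u) ]. -/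

import Mathlib

/-- Partial derivative in the `i`-th coordinate direction. -/
noncomputable def pd {k : ℕ} (f : (Fin k → ℝ) → ℝ) (i : Fin k) (u : Fin k → ℝ) : ℝ :=
  fderiv ℝ f u (Pi.single i 1)

/-- The open standard simplex of `ℝ^k`. -/
def stdSimplex' (k : ℕ) : Set (Fin k → ℝ) :=
  {u | (∀ i, 0 < u i) ∧ ∑ i, u i < 1}

/-- The Dirichlet density `s_k(u) = (1-u_1-⋯-u_k)^{N-k-1}` on `ℝ^k`. -/
noncomputable def sk (N k : ℕ) (u : Fin k → ℝ) : ℝ := (1 - ∑ i, u i) ^ (N - k - 1)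

/-- The product `f = g ⋅ s_k`. -/
noncomputable def fprod (N k : ℕ) (g : (Fin k → ℝ) → ℝ) (u : Fin k → ℝ) : ℝ :=
  g u * sk N k u

noncomputable def Lsum (k : ℕ) : (Fin k → ℝ) →L[ℝ] ℝ := ∑ j, ContinuousLinearMap.proj j

lemma Lsum_apply {k : ℕ} (u : Fin k → ℝ) : Lsum k u = ∑ j, u j := by
  simp [Lsum]

lemma Lsum_single {k : ℕ} (i : Fin k) : Lsum k (Pi.single i 1) = 1 := by
  rw [Lsum_apply]; exact Fintype.sum_pi_single' i 1

noncomputable def Ppow (k n : ℕ) : (Fin k → ℝ) → ℝ := fun u => (1 - ∑ j, u j) ^ n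

lemma hasFDerivAt_S {k : ℕ} (u : Fin k → ℝ) :
    HasFDerivAt (fun u : Fin k → ℝ => 1 - ∑ j, u j) (-Lsum k) u := by
  have h : HasFDerivAt (fun u : Fin k → ℝ => (1:ℝ) - Lsum k u) (0 - Lsum k) u :=
    (hasFDerivAt_const (1:ℝ) u).sub (Lsum k).hasFDerivAt
  simp only [Lsum_apply, zero_sub] at h
  exact h

lemma hasFDerivAt_P {k : ℕ} (n : ℕ) (u : Fin k → ℝ) :
    HasFDerivAt (Ppow k n) ((-(n : ℝ) * (1 - ∑ j, u j) ^ (n - 1)) • Lsum k) u := by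
  have h := (hasDerivAt_pow n (1 - ∑ j, u j)).comp_hasFDerivAt u (hasFDerivAt_S u)
  have : ((n : ℝ) * (1 - ∑ j, u j) ^ (n - 1)) • (-Lsum k)
      = (-(n : ℝ) * (1 - ∑ j, u j) ^ (n - 1)) • Lsum k := by
    rw [smul_neg, ← neg_smul]; ring_nf
  rw [this] at h
  exact h

lemma diffAt_P {k : ℕ} (n : ℕ) (u : Fin k → ℝ) : DifferentiableAt ℝ (Ppow k n) u :=
  (hasFDerivAt_P n u).differentiableAt

lemma pd_P {k : ℕ} (n : ℕ) (i : Fin k) (u : Fin k → ℝ) :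
    pd (Ppow k n) i u = -(n : ℝ) * Ppow k (n - 1) u := by
  rw [pd, (hasFDerivAt_P n u).fderiv]
  simp [Lsum_single, Ppow]

lemma pd_mul {k : ℕ} {φ ψ : (Fin k → ℝ) → ℝ} {u : Fin k → ℝ}
    (hφ : DifferentiableAt ℝ φ u) (hψ : DifferentiableAt ℝ ψ u) (i : Fin k) :
    pd (fun x => φ x * ψ x) i u = pd φ i u * ψ u + φ u * pd ψ i u := by
  rw [pd, fderiv_fun_mul hφ hψ]
  simp [pd]; ring

lemma pd_add {k : ℕ} {φ ψ : (Fin k → ℝ) → ℝ} {u : Fin k → ℝ}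
    (hφ : DifferentiableAt ℝ φ u) (hψ : DifferentiableAt ℝ ψ u) (i : Fin k) :
    pd (fun x => φ x + ψ x) i u = pd φ i u + pd ψ i u := by
  rw [pd, fderiv_fun_add hφ hψ]
  simp [pd]

lemma pd_const_mul {k : ℕ} {ψ : (Fin k → ℝ) → ℝ} {u : Fin k → ℝ} (c : ℝ)
    (hψ : DifferentiableAt ℝ ψ u) (i : Fin k) :
    pd (fun x => c * ψ x) i u = c * pd ψ i u := by
  rw [pd, fderiv_const_mul hψ]
  simp [pd]

lemma pow_pred (n : ℕ) (X : ℝ) : (n : ℝ) * (X ^ (n - 1) * X) = (n : ℝ) * X ^ n := by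
  cases n with
  | zero => simp
  | succ n => simp [pow_succ]

lemma pow_pred2 (n : ℕ) (X : ℝ) :
    (n : ℝ) * ((n - 1 : ℕ) : ℝ) * (X ^ (n - 1 - 1) * X)
      = (n : ℝ) * ((n - 1 : ℕ) : ℝ) * X ^ (n - 1) := by
  cases n with
  | zero => simp
  | succ n =>
    simp only [Nat.add_sub_cancel]
    push_cast
    linear_combination ((n:ℝ)+1) * pow_pred n X

lemma cast_pred_mul (n : ℕ) : (n : ℝ) * ((n - 1 : ℕ) : ℝ) = (n : ℝ) * ((n : ℝ) - 1) := by
  cases n with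
  | zero => simp
  | succ n => push_cast [Nat.add_sub_cancel]; ring

lemma sum_offdiag {k : ℕ} (f : Fin k → Fin k → ℝ) :
    (∑ i, ∑ j, if i ≠ j then f i j else 0) = (∑ i, ∑ j, f i j) - ∑ i, f i i := by
  have h : ∀ i, (∑ j, if i ≠ j then f i j else 0) = (∑ j, f i j) - f i i := by
    intro i
    have hj : ∀ j ∈ Finset.univ, (if i ≠ j then f i j else 0)
        = f i j - (if j = i then f i j else 0) := by
      intro j _
      by_cases h : i = j <;> simp [h, eq_comm]
    rw [Finset.sum_congr rfl hj, Finset.sum_sub_distrib, Finset.sum_ite_eq' Finset.univ i (f i),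
      if_pos (Finset.mem_univ i)]
  simp only [h, Finset.sum_sub_distrib]


/-- Conjugating the operator
`k(N-k-1) + ∑_i (1+(N-2k-2)u_i)∂_i + ∑_i u_i(1-u_i)∂_{ii} - ∑_{i≠j} u_i u_j ∂_{ij}`
by the Dirichlet density `s_k` produces the generalized Jacobi operator on the simplex. -/
theorem stmt_10 (N k : ℕ) (hN : 2 ≤ N) (hk1 : 1 ≤ k) (hk2 : k ≤ N - 1)
    (g : (Fin k → ℝ) → ℝ) (U : Set (Fin k → ℝ)) (hU : IsOpen U)
    (hUs : stdSimplex' k ⊆ U) (hg : ContDiffOn ℝ 2 g U)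
    (u : Fin k → ℝ) (hu : u ∈ stdSimplex' k) :
    (k : ℝ) * ((N : ℝ) - k - 1) * fprod N k g u +
        (∑ i, (1 + ((N : ℝ) - 2 * k - 2) * u i) * pd (fprod N k g) i u) +
        (∑ i, u i * (1 - u i) * pd (pd (fprod N k g) i) i u) -
        (∑ i, ∑ j, if i ≠ j then u i * u j * pd (pd (fprod N k g) j) i u else 0) =
      sk N k u *
        ((∑ i, (1 - (N : ℝ) * u i) * pd g i u) +
          (∑ i, u i * (1 - u i) * pd (pd g i) i u) -
          (∑ i, ∑ j, if i ≠ j then u i * u j * pd (pd g j) i u else 0)) := by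
  have hxU : u ∈ U := hUs hu
  set m : ℕ := N - k - 1 with hm
  have hcast : (m : ℝ) = (N : ℝ) - k - 1 := by
    rw [hm, Nat.sub_sub, Nat.cast_sub (by omega)]
    push_cast; ring
  have hg2 : ∀ x ∈ U, DifferentiableAt ℝ g x := fun x hx =>
    (hg.differentiableOn (by norm_num)).differentiableAt (hU.mem_nhds hx)
  have hfprod : fprod N k g = fun y => g y * Ppow k m y := rfl
  have hfd : ∀ x ∈ U, ∀ i, pd (fprod N k g) i x
      = pd g i x * Ppow k m x + g x * (-(m : ℝ) * Ppow k (m - 1) x) := by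
    intro x hx i
    rw [hfprod, pd_mul (hg2 x hx) (diffAt_P m x), pd_P]
  have hpdg_diff : ∀ j, DifferentiableAt ℝ (pd g j) u := by
    have hcd : ContDiffAt ℝ 2 g u := hg.contDiffAt (hU.mem_nhds hxU)
    have h1 : ContDiffAt ℝ 1 (fderiv ℝ g) u := hcd.fderiv_right (by norm_num)
    intro j
    exact (h1.differentiableAt (by norm_num)).clm_apply (differentiableAt_const _)
  have hfirst : ∀ i, pd (fprod N k g) i u
      = pd g i u * Ppow k m u + g u * (-(m : ℝ) * Ppow k (m - 1) u) :=
    fun i => hfd u hxU i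
  have hsecond : ∀ i j, pd (pd (fprod N k g) j) i u
      = pd (pd g j) i u * Ppow k m u
        - (m : ℝ) * (pd g i u + pd g j u) * Ppow k (m - 1) u
        + (m : ℝ) * ((m - 1 : ℕ) : ℝ) * g u * Ppow k (m - 1 - 1) u := by
    intro i j
    have hev : (fun x => pd (fprod N k g) j x)
        =ᶠ[nhds u] fun x => pd g j x * Ppow k m x + g x * (-(m : ℝ) * Ppow k (m - 1) x) := by
      filter_upwards [hU.mem_nhds hxU] with x hx
      exact hfd x hx j
    have h0 : pd (pd (fprod N k g) j) i u
        = pd (fun x => pd g j x * Ppow k m x + g x * (-(m : ℝ) * Ppow k (m - 1) x)) i u :=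
      congrArg (fun D : (Fin k → ℝ) →L[ℝ] ℝ => D (Pi.single i 1)) hev.fderiv_eq
    rw [h0, pd_add ((hpdg_diff j).fun_mul (diffAt_P m u))
        ((hg2 u hxU).fun_mul ((differentiableAt_const _).fun_mul (diffAt_P (m - 1) u))),
      pd_mul (hpdg_diff j) (diffAt_P m u),
      pd_mul (hg2 u hxU) ((differentiableAt_const _).fun_mul (diffAt_P (m - 1) u)),
      pd_const_mul _ (diffAt_P (m - 1) u), pd_P, pd_P]
    ring
  simp only [hfirst, hsecond]
  rw [sum_offdiag, sum_offdiag]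
  have hS1 : ∑ i, (1 + ((N : ℝ) - 2 * k - 2) * u i)
        * (pd g i u * Ppow k m u + g u * (-(m : ℝ) * Ppow k (m - 1) u))
      = Ppow k m u * (∑ i, pd g i u)
        + ((N : ℝ) - 2 * k - 2) * Ppow k m u * (∑ i, u i * pd g i u)
        - (m : ℝ) * g u * Ppow k (m - 1) u * (k : ℝ)
        - (m : ℝ) * g u * Ppow k (m - 1) u * ((N : ℝ) - 2 * k - 2) * (∑ i, u i) := by
    rw [Finset.sum_congr rfl (fun i _ => show _ =
        (pd g i u) * Ppow k m u
        + (u i * pd g i u) * (((N : ℝ) - 2 * k - 2) * Ppow k m u)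
        + (-((m : ℝ) * g u * Ppow k (m - 1) u))
        + (u i) * (-((m : ℝ) * g u * Ppow k (m - 1) u * ((N : ℝ) - 2 * k - 2))) from by ring)]
    simp only [Finset.sum_add_distrib, ← Finset.sum_mul, Finset.sum_const, Finset.card_univ,
      Fintype.card_fin, nsmul_eq_mul]
    ring
  have hS2 : ∑ i, u i * (1 - u i)
        * (pd (pd g i) i u * Ppow k m u
          - (m : ℝ) * (pd g i u + pd g i u) * Ppow k (m - 1) u
          + (m : ℝ) * ((m - 1 : ℕ) : ℝ) * g u * Ppow k (m - 1 - 1) u)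
      = Ppow k m u * (∑ i, u i * (1 - u i) * pd (pd g i) i u)
        - 2 * (m : ℝ) * Ppow k (m - 1) u
            * ((∑ i, u i * pd g i u) - (∑ i, u i * u i * pd g i u))
        + (m : ℝ) * ((m - 1 : ℕ) : ℝ) * g u * Ppow k (m - 1 - 1) u
            * ((∑ i, u i) - (∑ i, u i * u i)) := by
    rw [Finset.sum_congr rfl (fun i _ => show _ =
        (u i * (1 - u i) * pd (pd g i) i u) * Ppow k m u
        + (u i * pd g i u) * (-(2 * (m : ℝ) * Ppow k (m - 1) u))
        + (u i * u i * pd g i u) * (2 * (m : ℝ) * Ppow k (m - 1) u)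
        + (u i) * ((m : ℝ) * ((m - 1 : ℕ) : ℝ) * g u * Ppow k (m - 1 - 1) u)
        + (u i * u i) * (-((m : ℝ) * ((m - 1 : ℕ) : ℝ) * g u * Ppow k (m - 1 - 1) u))
        from by ring)]
    simp only [Finset.sum_add_distrib, ← Finset.sum_mul]
    ring
  have hS3diag : ∑ i, u i * u i
        * (pd (pd g i) i u * Ppow k m u
          - (m : ℝ) * (pd g i u + pd g i u) * Ppow k (m - 1) u
          + (m : ℝ) * ((m - 1 : ℕ) : ℝ) * g u * Ppow k (m - 1 - 1) u)
      = Ppow k m u * (∑ i, u i * u i * pd (pd g i) i u)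
        - 2 * (m : ℝ) * Ppow k (m - 1) u * (∑ i, u i * u i * pd g i u)
        + (m : ℝ) * ((m - 1 : ℕ) : ℝ) * g u * Ppow k (m - 1 - 1) u * (∑ i, u i * u i) := by
    rw [Finset.sum_congr rfl (fun i _ => show _ =
        (u i * u i * pd (pd g i) i u) * Ppow k m u
        + (u i * u i * pd g i u) * (-(2 * (m : ℝ) * Ppow k (m - 1) u))
        + (u i * u i) * ((m : ℝ) * ((m - 1 : ℕ) : ℝ) * g u * Ppow k (m - 1 - 1) u)
        from by ring)]
    simp only [Finset.sum_add_distrib, ← Finset.sum_mul]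
    ring
  have hS3full : ∑ i, ∑ j, u i * u j
        * (pd (pd g j) i u * Ppow k m u
          - (m : ℝ) * (pd g i u + pd g j u) * Ppow k (m - 1) u
          + (m : ℝ) * ((m - 1 : ℕ) : ℝ) * g u * Ppow k (m - 1 - 1) u)
      = Ppow k m u * (∑ i, ∑ j, u i * u j * pd (pd g j) i u)
        - 2 * (m : ℝ) * Ppow k (m - 1) u * ((∑ i, u i) * (∑ i, u i * pd g i u))
        + (m : ℝ) * ((m - 1 : ℕ) : ℝ) * g u * Ppow k (m - 1 - 1) u
            * ((∑ i, u i) * (∑ i, u i)) := by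
    have inner : ∀ i, (∑ j, u i * u j
        * (pd (pd g j) i u * Ppow k m u
          - (m : ℝ) * (pd g i u + pd g j u) * Ppow k (m - 1) u
          + (m : ℝ) * ((m - 1 : ℕ) : ℝ) * g u * Ppow k (m - 1 - 1) u))
        = (∑ j, u i * u j * pd (pd g j) i u) * Ppow k m u
          + (∑ j, u j * pd g j u) * (-((m : ℝ) * Ppow k (m - 1) u * u i))
          + (∑ j, u j) * (-((m : ℝ) * Ppow k (m - 1) u * (u i * pd g i u)))
          + (∑ j, u j) * ((m : ℝ) * ((m - 1 : ℕ) : ℝ) * g u * Ppow k (m - 1 - 1) u * u i) := by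
      intro i
      rw [Finset.sum_congr rfl (fun j _ => show _ =
          (u i * u j * pd (pd g j) i u) * Ppow k m u
          + (u j * pd g j u) * (-((m : ℝ) * Ppow k (m - 1) u * u i))
          + (u j) * (-((m : ℝ) * Ppow k (m - 1) u * (u i * pd g i u)))
          + (u j) * ((m : ℝ) * ((m - 1 : ℕ) : ℝ) * g u * Ppow k (m - 1 - 1) u * u i)
          from by ring)]
      simp only [Finset.sum_add_distrib, ← Finset.sum_mul]
    rw [Finset.sum_congr rfl (fun i _ => inner i)]
    rw [Finset.sum_congr rfl (fun i _ => show _ =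
        ((∑ j, u i * u j * pd (pd g j) i u)) * Ppow k m u
        + (u i) * (-((m : ℝ) * Ppow k (m - 1) u * (∑ j, u j * pd g j u)))
        + (u i * pd g i u) * (-((m : ℝ) * Ppow k (m - 1) u * (∑ j, u j)))
        + (u i) * ((m : ℝ) * ((m - 1 : ℕ) : ℝ) * g u * Ppow k (m - 1 - 1) u * (∑ j, u j))
        from by ring)]
    simp only [Finset.sum_add_distrib, ← Finset.sum_mul]
    ring
  have hR1 : ∑ i, (1 - (N : ℝ) * u i) * pd g i u
      = (∑ i, pd g i u) - (N : ℝ) * (∑ i, u i * pd g i u) := by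
    rw [Finset.sum_congr rfl (fun i _ => show _ =
        (pd g i u) + (u i * pd g i u) * (-(N : ℝ)) from by ring)]
    simp only [Finset.sum_add_distrib, ← Finset.sum_mul]
    ring
  rw [hS1, hS2, hS3diag, hS3full, hR1,
    show fprod N k g u = g u * Ppow k m u from rfl,
    show sk N k u = Ppow k m u from rfl]
  have hE1 : (m : ℝ) * (Ppow k (m - 1) u * (1 - ∑ i, u i)) = (m : ℝ) * Ppow k m u :=
    pow_pred m (1 - ∑ i, u i)
  have hE2 : (m : ℝ) * ((m - 1 : ℕ) : ℝ) * (Ppow k (m - 1 - 1) u * (1 - ∑ i, u i))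
      = (m : ℝ) * ((m - 1 : ℕ) : ℝ) * Ppow k (m - 1) u :=
    pow_pred2 m (1 - ∑ i, u i)
  have hcc := cast_pred_mul m
  linear_combination
    (-((k : ℝ) * g u + 2 * (∑ i, u i * pd g i u))) * hE1
    + (g u * (∑ i, u i)) * hE2
    + (g u * Ppow k (m - 1) u * (∑ i, u i)) * hcc
    + (g u * Ppow k (m - 1) u * (∑ i, u i) * (m : ℝ)
        - (k : ℝ) * g u * Ppow k m u
        - 2 * Ppow k m u * (∑ i, u i * pd g i u)) * hcast
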